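/- arXiv:1412.6081 — 3 statements merged into one kernel-verified Lean document; each statement's English description precedes it below -/
import Mathlib

section
/- Let N ≥ 1 and η ∈ ℂ∖{0} with η not a root of unity. Let Q₀ = 1 and, for 1 ≤ j ≤ N, let Q_j ∈ ℂ[u] be a monic polynomial of degree j all of whose roots are simple and nonzero; write μ₁, …, μ_N for the roots of Q_N. Assume the genericity condition that for every 1 ≤ j ≤ N, no root of Q_j equals η·σ' or η⁻¹·σ' for a root σ' of Q_{j−1}. Suppose the Bethe equations hold: for every 1 ≤ j ≤ N−1 and every root σ of Q_j, τ_j·Q_{j−1}(ησ)·Q_j(η⁻²σ)·Q_{j+1}(ησ) + τ_{j+1}·Q_{j−1}(η⁻¹σ)·Q_j(η²σ)·Q_{j+1}(η⁻¹σ) = 0, where τ₁, …, τ_N ∈ ℂ. Then Σ_{α=1}^{N} [ ∏_{β≠α} (η⁻¹μ_α − ημ_β)/(μ_α − μ_β) ] · τ_N · η^{1−N} · Q_{N−1}(ημ_α)/Q_{N−1}(η⁻¹μ_α) = τ₁ + τ₂ + ⋯ + τ_N. -/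
open Polynomial Finset

private lemma prod_toFinset_eq {m : Multiset ℂ} (hn : m.Nodup) (f : ℂ → ℂ) :
    ∏ x ∈ m.toFinset, f x = (m.map f).prod := by
  rw [Finset.prod, Multiset.toFinset_val, Multiset.dedup_eq_self.mpr hn]

private lemma eval_eq_prod_roots {p : Polynomial ℂ} (hm : p.Monic) (hn : p.roots.Nodup) (t : ℂ) :
    p.eval t = ∏ σ ∈ p.roots.toFinset, (t - σ) := by
  conv_lhs => rw [(IsAlgClosed.splits p).eq_prod_roots_of_monic hm]
  rw [prod_toFinset_eq hn, eval_multiset_prod, Multiset.map_map]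
  simp

private lemma card_roots_toFinset {p : Polynomial ℂ} (hn : p.roots.Nodup) :
    p.roots.toFinset.card = p.natDegree := by
  rw [Multiset.toFinset_card_of_nodup hn,
    (Polynomial.splits_iff_card_roots).mp (IsAlgClosed.splits p)]

private lemma residue_sum (s : Finset ℂ) (P : Polynomial ℂ) (h : P.degree < s.card) :
    ∑ r ∈ s, P.eval r / ∏ k ∈ s.erase r, (r - k) = P.coeff (s.card - 1) := by
  have hinj : Set.InjOn (id : ℂ → ℂ) s := Function.injective_id.injOn
  have hP := Lagrange.eq_interpolate (f := P) hinj h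
  nth_rewrite 2 [hP]
  rw [Lagrange.interpolate_apply, finset_sum_coeff]
  refine (Finset.sum_congr rfl fun r hr => ?_)
  rw [coeff_C_mul]
  have hb : (Lagrange.basis s id r).coeff (s.card - 1) = ∏ k ∈ s.erase r, (r - k)⁻¹ := by
    rw [Lagrange.basis_eq_prod_sub_inv_mul_nodal_div hr, ← Lagrange.nodal_erase_eq_nodal_div hr,
      coeff_C_mul]
    have hm : (Lagrange.nodal (s.erase r) id).Monic := Lagrange.nodal_monic
    have hd : (Lagrange.nodal (s.erase r) id).natDegree = s.card - 1 := by
      rw [Lagrange.natDegree_nodal, Finset.card_erase_of_mem hr]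
    rw [← hd, hm.coeff_natDegree, mul_one]
    simp [Lagrange.nodalWeight]
  rw [hb, Finset.prod_inv_distrib, ← div_eq_mul_inv, id]

private lemma prod_scale (T : Finset ℂ) (c : ℂ) (f g : ℂ → ℂ) (h : ∀ x ∈ T, f x = c * g x) :
    ∏ x ∈ T, f x = c ^ T.card * ∏ x ∈ T, g x := by
  rw [Finset.prod_congr rfl h, Finset.prod_mul_distrib, Finset.prod_const]

private lemma scalar_claimB (η σ x1 x2 y2 z1 z2 n2 d2 ta tb : ℂ) (k : ℕ)
    (hη : η ≠ 0) (hσ : σ ≠ 0) (hx2 : x2 ≠ 0) (hd2 : d2 ≠ 0) (hz1 : z1 ≠ 0)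
    (hbN : ta * x1 * ((η⁻¹ - η) * σ * n2) * z1 + tb * x2 * y2 * z2 * (η ^ k * η) = 0) :
    tb * η * (z2 * y2) / (η * σ * (z1 * (η ^ k * d2))) =
      -((η⁻¹ - η) * (η ^ k * η)⁻¹) * ((n2 / d2) * (ta * (η / (η ^ k * η)) * (x1 / x2))) := by
  have hpk : (η : ℂ) ^ k ≠ 0 := pow_ne_zero _ hη
  have h1 : η * σ * (z1 * (η ^ k * d2)) ≠ 0 :=
    mul_ne_zero (mul_ne_zero hη hσ) (mul_ne_zero hz1 (mul_ne_zero hpk hd2))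
  have h2 : (η ^ k * η) * ((η ^ k * η) * (d2 * x2)) ≠ 0 :=
    mul_ne_zero (mul_ne_zero hpk hη)
      (mul_ne_zero (mul_ne_zero hpk hη) (mul_ne_zero hd2 hx2))
  rw [show -((η⁻¹ - η) * (η ^ k * η)⁻¹) * ((n2 / d2) * (ta * (η / (η ^ k * η)) * (x1 / x2))) =
      (-((η⁻¹ - η) * n2 * ta * η * x1)) / ((η ^ k * η) * ((η ^ k * η) * (d2 * x2))) from by
    ring]
  rw [div_eq_div_iff h1 h2]
  linear_combination (d2 * (η ^ k * η ^ 2)) * hbN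

set_option maxHeartbeats 2000000 in
theorem aux_S (N : ℕ) (η : ℂ) (hη : η ≠ 0) (hη2 : η ^ 2 ≠ 1)
    (Q : ℕ → Polynomial ℂ) (hQ0 : Q 0 = 1)
    (hmonic : ∀ j : ℕ, 1 ≤ j → j ≤ N → (Q j).Monic)
    (hdeg : ∀ j : ℕ, 1 ≤ j → j ≤ N → (Q j).natDegree = j)
    (hsimple : ∀ j : ℕ, 1 ≤ j → j ≤ N → (Q j).roots.Nodup)
    (hnonzeroroot : ∀ j : ℕ, 1 ≤ j → j ≤ N → (Q j).eval 0 ≠ 0)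
    (hgen : ∀ j : ℕ, 1 ≤ j → j ≤ N → ∀ x y : ℂ,
      (Q j).eval x = 0 → (Q (j - 1)).eval y = 0 → x ≠ η * y ∧ x ≠ η⁻¹ * y)
    (τ' : ℕ → ℂ)
    (hbethe : ∀ j : ℕ, 1 ≤ j → j + 1 ≤ N → ∀ x : ℂ, (Q j).eval x = 0 →
      τ' (j - 1) * (Q (j - 1)).eval (η * x) * (Q j).eval ((η ^ 2)⁻¹ * x) *
          (Q (j + 1)).eval (η * x) +
        τ' j * (Q (j - 1)).eval (η⁻¹ * x) * (Q j).eval (η ^ 2 * x) *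
          (Q (j + 1)).eval (η⁻¹ * x) = 0) :
    ∀ j : ℕ, 1 ≤ j → j ≤ N →
      ∑ σ ∈ (Q j).roots.toFinset,
        (∏ σ' ∈ ((Q j).roots.toFinset).erase σ, (η⁻¹ * σ - η * σ') / (σ - σ')) *
          (τ' (j - 1) * η ^ ((1 : ℤ) - (j : ℤ)) *
            ((Q (j - 1)).eval (η * σ) / (Q (j - 1)).eval (η⁻¹ * σ))) =
      ∑ i ∈ Finset.range j, τ' i := by
  have hη1 : η⁻¹ - η ≠ 0 := by
    intro h
    apply hη2
    have h' : η⁻¹ = η := sub_eq_zero.mp h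
    calc η ^ 2 = η * η := sq η
    _ = η * η⁻¹ := by rw [h']
    _ = 1 := mul_inv_cancel₀ hη
  have hQne : ∀ m : ℕ, 1 ≤ m → m ≤ N → Q m ≠ 0 := fun m h1 h2 => (hmonic m h1 h2).ne_zero
  have hmem : ∀ m : ℕ, 1 ≤ m → m ≤ N → ∀ x : ℂ,
      (Q m).eval x = 0 ↔ x ∈ (Q m).roots.toFinset := by
    intro m h1 h2 x
    exact ⟨fun h => Multiset.mem_toFinset.mpr ((mem_roots (hQne m h1 h2)).mpr h),
      fun h => (mem_roots (hQne m h1 h2)).mp (Multiset.mem_toFinset.mp h)⟩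
  have hEprod : ∀ m : ℕ, 1 ≤ m → m ≤ N → ∀ t : ℂ,
      (Q m).eval t = ∏ σ ∈ (Q m).roots.toFinset, (t - σ) := fun m h1 h2 =>
    eval_eq_prod_roots (hmonic m h1 h2) (hsimple m h1 h2)
  have hcard : ∀ m : ℕ, 1 ≤ m → m ≤ N → (Q m).roots.toFinset.card = m := fun m h1 h2 => by
    rw [card_roots_toFinset (hsimple m h1 h2), hdeg m h1 h2]
  have hprev : ∀ m : ℕ, 1 ≤ m → m ≤ N → ∀ σ : ℂ, (Q m).eval σ = 0 →
      (Q (m - 1)).eval (η * σ) ≠ 0 ∧ (Q (m - 1)).eval (η⁻¹ * σ) ≠ 0 := by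
    intro m h1 h2 σ hσ
    constructor
    · intro hy
      exact (hgen m h1 h2 σ (η * σ) hσ hy).2 (by rw [inv_mul_cancel_left₀ hη])
    · intro hy
      exact (hgen m h1 h2 σ (η⁻¹ * σ) hσ hy).1 (by rw [mul_inv_cancel_left₀ hη])
  have hzero : ∀ m : ℕ, 1 ≤ m → m ≤ N → ∀ σ : ℂ, (Q m).eval σ = 0 → σ ≠ 0 := by
    intro m h1 h2 σ hσ h0
    exact hnonzeroroot m h1 h2 (h0 ▸ hσ)
  refine Nat.le_induction ?_ ?_
  · -- base case j = 1
    intro h1N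
    obtain ⟨a, ha⟩ := Finset.card_eq_one.mp (hcard 1 le_rfl h1N)
    rw [ha]
    simp [hQ0]
  · -- inductive step
    intro j hj1 IH hjN1
    have hjN : j ≤ N := Nat.le_of_succ_le hjN1
    have IHj := IH hjN
    clear IH
    simp only [Nat.add_sub_cancel]
    set A := (Q (j + 1)).roots.toFinset with hAdef
    set B := (Q j).roots.toFinset with hBdef
    have hcardA : A.card = j + 1 := hcard (j + 1) (by omega) hjN1
    have hcardB : B.card = j := hcard j hj1 hjN
    have hevalA : ∀ t : ℂ, (Q (j + 1)).eval t = ∏ σ ∈ A, (t - σ) :=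
      hEprod (j + 1) (by omega) hjN1
    have hevalB : ∀ t : ℂ, (Q j).eval t = ∏ σ ∈ B, (t - σ) := hEprod j hj1 hjN
    have hmemA : ∀ x : ℂ, (Q (j + 1)).eval x = 0 ↔ x ∈ A := hmem (j + 1) (by omega) hjN1
    have hmemB : ∀ x : ℂ, (Q j).eval x = 0 ↔ x ∈ B := hmem j hj1 hjN
    have hA0 : (0 : ℂ) ∉ A := fun h => hnonzeroroot (j + 1) (by omega) hjN1 ((hmemA 0).mpr h)
    have hB0 : (0 : ℂ) ∉ B := fun h => hnonzeroroot j hj1 hjN ((hmemB 0).mpr h)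
    have hgenA := hgen (j + 1) (by omega) hjN1
    simp only [Nat.add_sub_cancel] at hgenA
    have hAI : Disjoint A (B.image (fun x : ℂ => η * x)) := by
      rw [Finset.disjoint_right]
      intro x hxI hxA
      obtain ⟨σ'', hσ'', rfl⟩ := Finset.mem_image.mp hxI
      exact (hgenA (η * σ'') σ'' ((hmemA _).mpr hxA) ((hmemB _).mpr hσ'')).1 rfl
    have h0I : (0 : ℂ) ∉ B.image (fun x : ℂ => η * x) := by
      intro h
      obtain ⟨σ'', hσ'', he⟩ := Finset.mem_image.mp h
      exact hzero j hj1 hjN σ'' ((hmemB σ'').mpr hσ'')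
        ((mul_eq_zero.mp he).resolve_left hη)
    have h0AI : (0 : ℂ) ∉ A ∪ B.image (fun x : ℂ => η * x) := by
      simp only [Finset.mem_union]
      tauto
    have hinjf : Function.Injective (fun x : ℂ => η * x) := fun a b h =>
      mul_left_cancel₀ hη h
    have hcardI : (B.image (fun x : ℂ => η * x)).card = j := by
      rw [Finset.card_image_of_injective _ hinjf, hcardB]
    have hcardR : (insert (0 : ℂ) (A ∪ B.image (fun x : ℂ => η * x))).card = 2 * j + 2 := by
      rw [Finset.card_insert_of_notMem h0AI, Finset.card_union_of_disjoint hAI,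
        hcardA, hcardI]
      ring
    set F := (Q (j + 1)).comp (C (η ^ 2)⁻¹ * X) with hFdef
    set G := (Q j).comp (C η * X) with hGdef
    set P := C (τ' j * η) * (F * G) with hPdef
    have hη2ne : ((η : ℂ) ^ 2)⁻¹ ≠ 0 := inv_ne_zero (pow_ne_zero 2 hη)
    have hFdeg : F.natDegree = j + 1 := by
      rw [hFdef, natDegree_comp, natDegree_C_mul_X _ hη2ne, hdeg (j + 1) (by omega) hjN1,
        mul_one]
    have hGdeg : G.natDegree = j := by
      rw [hGdef, natDegree_comp, natDegree_C_mul_X _ hη, hdeg j hj1 hjN, mul_one]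
    have hFlead : F.leadingCoeff = ((η ^ 2)⁻¹) ^ (j + 1) := by
      rw [hFdef, leadingCoeff_comp (by rw [natDegree_C_mul_X _ hη2ne]; exact one_ne_zero),
        (hmonic (j + 1) (by omega) hjN1).leadingCoeff, one_mul, leadingCoeff_mul_X,
        leadingCoeff_C, hdeg (j + 1) (by omega) hjN1]
    have hGlead : G.leadingCoeff = η ^ j := by
      rw [hGdef, leadingCoeff_comp (by rw [natDegree_C_mul_X _ hη]; exact one_ne_zero),
        (hmonic j hj1 hjN).leadingCoeff, one_mul, leadingCoeff_mul_X,
        leadingCoeff_C, hdeg j hj1 hjN]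
    have hFne : F ≠ 0 := leadingCoeff_ne_zero.mp (by rw [hFlead]; exact pow_ne_zero _ hη2ne)
    have hGne : G ≠ 0 := leadingCoeff_ne_zero.mp (by rw [hGlead]; exact pow_ne_zero _ hη)
    have hFGdeg : (F * G).natDegree = 2 * j + 1 := by
      rw [natDegree_mul hFne hGne, hFdeg, hGdeg]
      ring
    have hPd : P.degree ≤ ((2 * j + 1 : ℕ) : WithBot ℕ) := by
      refine le_trans (degree_mul_le _ _) ?_
      have h2 : (F * G).degree = ((2 * j + 1 : ℕ) : WithBot ℕ) := by
        rw [degree_eq_natDegree (mul_ne_zero hFne hGne), hFGdeg]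
      calc (C (τ' j * η)).degree + (F * G).degree ≤ 0 + (F * G).degree := by
            exact add_le_add_left (degree_C_le) _
        _ = (F * G).degree := by rw [zero_add]
        _ ≤ _ := by rw [h2]
    have hPdeg : P.degree <
        (((insert (0 : ℂ) (A ∪ B.image (fun x : ℂ => η * x))).card : ℕ) : WithBot ℕ) := by
      rw [hcardR]
      refine lt_of_le_of_lt hPd ?_
      exact_mod_cast Nat.lt_succ_self (2 * j + 1)
    have hPcoeff : P.coeff (2 * j + 1) = τ' j * η * (((η ^ 2)⁻¹) ^ (j + 1) * η ^ j) := by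
      rw [hPdef, coeff_C_mul, show 2 * j + 1 = F.natDegree + G.natDegree by
        rw [hFdeg, hGdeg]; ring, coeff_mul_degree_add_degree, hFlead, hGlead]
    have hPeval : ∀ t : ℂ, P.eval t =
        τ' j * η * ((Q (j + 1)).eval ((η ^ 2)⁻¹ * t) * (Q j).eval (η * t)) := by
      intro t
      simp only [hPdef, hFdef, hGdef, eval_mul, eval_C, eval_comp, eval_mul, eval_C, eval_X]
    have hres := residue_sum (insert (0 : ℂ) (A ∪ B.image (fun x : ℂ => η * x))) P hPdeg
    rw [hcardR, show 2 * j + 2 - 1 = 2 * j + 1 from by omega, hPcoeff] at hres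
    rw [Finset.sum_insert h0AI, Finset.sum_union hAI,
      Finset.sum_image (fun a _ b _ h => hinjf h)] at hres
    have claim0 : P.eval 0 /
        ∏ k ∈ (insert (0 : ℂ) (A ∪ B.image (fun x : ℂ => η * x))).erase 0, (0 - k) =
        τ' j * (η * (η ^ j)⁻¹) := by
      rw [Finset.erase_insert h0AI, Finset.prod_union hAI,
        Finset.prod_image (fun a _ b _ h => hinjf h)]
      have h2 : ∏ σ'' ∈ B, (0 - η * σ'') = η ^ j * ∏ σ'' ∈ B, (0 - σ'') := by
        rw [prod_scale B η _ (fun x => 0 - x) (fun x _ => by ring), hcardB]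
      rw [h2, ← hevalA 0, ← hevalB 0, hPeval 0, mul_zero, mul_zero]
      have hA0' : (Q (j + 1)).eval 0 ≠ 0 := hnonzeroroot (j + 1) (by omega) hjN1
      have hB0' : (Q j).eval 0 ≠ 0 := hnonzeroroot j hj1 hjN
      field_simp
    have claimA : ∀ σ ∈ A, P.eval σ /
        ∏ k ∈ (insert (0 : ℂ) (A ∪ B.image (fun x : ℂ => η * x))).erase σ, (σ - k) =
        ((η⁻¹ - η) * (η ^ j)⁻¹) *
          ((∏ σ' ∈ A.erase σ, (η⁻¹ * σ - η * σ') / (σ - σ')) *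
            (τ' j * η ^ ((1 : ℤ) - ((j + 1 : ℕ) : ℤ)) *
              ((Q j).eval (η * σ) / (Q j).eval (η⁻¹ * σ)))) := by
      intro σ hσ
      have hσA : (Q (j + 1)).eval σ = 0 := (hmemA σ).mpr hσ
      have hσ0 : σ ≠ 0 := hzero (j + 1) (by omega) hjN1 σ hσA
      have hσI : σ ∉ B.image (fun x : ℂ => η * x) := Finset.disjoint_left.mp hAI hσ
      have hpv := hprev (j + 1) (by omega) hjN1 σ hσA
      simp only [Nat.add_sub_cancel] at hpv
      have herase : (insert (0 : ℂ) (A ∪ B.image (fun x : ℂ => η * x))).erase σ =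
          insert 0 ((A.erase σ) ∪ B.image (fun x : ℂ => η * x)) := by
        rw [Finset.erase_insert_of_ne (fun h => hσ0 h.symm), Finset.erase_union_distrib,
          Finset.erase_eq_of_notMem hσI]
      have h0' : (0 : ℂ) ∉ (A.erase σ) ∪ B.image (fun x : ℂ => η * x) := by
        simp only [Finset.mem_union, Finset.mem_erase]
        rintro (⟨-, h⟩ | h)
        · exact hA0 h
        · exact h0I h
      have hdisj' : Disjoint (A.erase σ) (B.image (fun x : ℂ => η * x)) :=
        Finset.disjoint_of_subset_left (Finset.erase_subset _ _) hAI
      rw [herase, Finset.prod_insert h0', Finset.prod_union hdisj',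
        Finset.prod_image (fun a _ b _ h => hinjf h)]
      have h2 : ∏ σ'' ∈ B, (σ - η * σ'') = η ^ j * (Q j).eval (η⁻¹ * σ) := by
        rw [prod_scale B η _ (fun x => η⁻¹ * σ - x)
          (fun x _ => by rw [mul_sub, mul_inv_cancel_left₀ hη]), hcardB, ← hevalB]
      have hNrel : (η⁻¹ - η) * σ * (∏ σ' ∈ A.erase σ, (η⁻¹ * σ - η * σ')) =
          η ^ (j + 1) * (Q (j + 1)).eval ((η ^ 2)⁻¹ * σ) := by
        have e1 : (η⁻¹ - η) * σ = η⁻¹ * σ - η * σ := by ring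
        rw [e1, Finset.mul_prod_erase A (fun σ' => η⁻¹ * σ - η * σ') hσ,
          prod_scale A η _ (fun σ' => (η ^ 2)⁻¹ * σ - σ')
            (fun x _ => by field_simp), hcardA, hevalA]
      have hzpA : η ^ ((1 : ℤ) - ((j + 1 : ℕ) : ℤ)) = η / η ^ (j + 1) := by
        rw [zpow_sub₀ hη, zpow_one, zpow_natCast]
      have hD : (∏ σ' ∈ A.erase σ, (σ - σ')) ≠ 0 :=
        Finset.prod_ne_zero_iff.mpr fun σ' h' =>
          sub_ne_zero.mpr (fun he => (Finset.mem_erase.mp h').1 he.symm)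
      have hE : (Q (j + 1)).eval ((η ^ 2)⁻¹ * σ) =
          (η⁻¹ - η) * σ * (∏ σ' ∈ A.erase σ, (η⁻¹ * σ - η * σ')) / η ^ (j + 1) := by
        rw [eq_div_iff (pow_ne_zero _ hη)]
        linear_combination -hNrel
      rw [h2, hPeval σ, hE, hzpA, Finset.prod_div_distrib, sub_zero]
      set d1 := ∏ σ' ∈ A.erase σ, (σ - σ') with hd1
      set n1 := ∏ σ' ∈ A.erase σ, (η⁻¹ * σ - η * σ') with hn1
      set e1 := (Q j).eval (η * σ) with he1
      set e2 := (Q j).eval (η⁻¹ * σ) with he2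
      have hEj : e2 ≠ 0 := hpv.2
      have hσc : σ * σ⁻¹ = 1 := mul_inv_cancel₀ hσ0
      field_simp
    have claimB : ∀ σ'' ∈ B, P.eval (η * σ'') /
        ∏ k ∈ (insert (0 : ℂ) (A ∪ B.image (fun x : ℂ => η * x))).erase (η * σ''),
          (η * σ'' - k) =
        -((η⁻¹ - η) * (η ^ j)⁻¹) *
          ((∏ σ''' ∈ B.erase σ'', (η⁻¹ * σ'' - η * σ''') / (σ'' - σ''')) *
            (τ' (j - 1) * η ^ ((1 : ℤ) - (j : ℤ)) *
              ((Q (j - 1)).eval (η * σ'') / (Q (j - 1)).eval (η⁻¹ * σ'')))) := by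
      intro σ'' hσ''B
      have hσB : (Q j).eval σ'' = 0 := (hmemB σ'').mpr hσ''B
      have hσ0 : σ'' ≠ 0 := hzero j hj1 hjN σ'' hσB
      have hv0 : η * σ'' ≠ 0 := mul_ne_zero hη hσ0
      have hvA : η * σ'' ∉ A := fun h =>
        (hgenA (η * σ'') σ'' ((hmemA _).mpr h) hσB).1 rfl
      have hvEA : (Q (j + 1)).eval (η * σ'') ≠ 0 := fun h => hvA ((hmemA _).mp h)
      have hpv := hprev j hj1 hjN σ'' hσB
      have hb := hbethe j hj1 hjN1 σ'' hσB
      have him : ((B.erase σ'').image (fun x : ℂ => η * x)) =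
          (B.image (fun x : ℂ => η * x)).erase (η * σ'') := Finset.image_erase hinjf B σ''
      have herase : (insert (0 : ℂ) (A ∪ B.image (fun x : ℂ => η * x))).erase (η * σ'') =
          insert 0 (A ∪ (B.erase σ'').image (fun x : ℂ => η * x)) := by
        rw [Finset.erase_insert_of_ne (fun h => hv0 h.symm), Finset.erase_union_distrib,
          Finset.erase_eq_of_notMem hvA, him]
      have h0'' : (0 : ℂ) ∉ A ∪ (B.erase σ'').image (fun x : ℂ => η * x) := by
        simp only [Finset.mem_union]
        rintro (h | h)
        · exact hA0 h
        · exact h0I (Finset.mem_of_mem_erase (him ▸ h))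
      have hdisj'' : Disjoint A ((B.erase σ'').image (fun x : ℂ => η * x)) :=
        Finset.disjoint_of_subset_right
          (Finset.image_subset_image (Finset.erase_subset _ _)) hAI
      rw [herase, Finset.prod_insert h0'', Finset.prod_union hdisj'',
        Finset.prod_image (fun a _ b _ h => hinjf h), sub_zero]
      have h3 : ∏ σ''' ∈ B.erase σ'', (η * σ'' - η * σ''') =
          η ^ (j - 1) * ∏ σ''' ∈ B.erase σ'', (σ'' - σ''') := by
        rw [prod_scale _ η _ (fun x => σ'' - x) (fun x _ => by ring),
          Finset.card_erase_of_mem hσ''B, hcardB]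
      have hN'' : (η⁻¹ - η) * σ'' * (∏ σ''' ∈ B.erase σ'', (η⁻¹ * σ'' - η * σ''')) =
          η ^ j * (Q j).eval ((η ^ 2)⁻¹ * σ'') := by
        have e1 : (η⁻¹ - η) * σ'' = η⁻¹ * σ'' - η * σ'' := by ring
        rw [e1, Finset.mul_prod_erase B (fun σ''' => η⁻¹ * σ'' - η * σ''') hσ''B,
          prod_scale B η _ (fun σ''' => (η ^ 2)⁻¹ * σ'' - σ''')
            (fun x _ => by field_simp), hcardB, hevalB]
      have harg1 : (η ^ 2)⁻¹ * (η * σ'') = η⁻¹ * σ'' := by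
        field_simp
      have harg2 : η * (η * σ'') = η ^ 2 * σ'' := by ring
      have hzpB : η ^ ((1 : ℤ) - (j : ℤ)) = η / η ^ j := by
        rw [zpow_sub₀ hη, zpow_one, zpow_natCast]
      rw [h3, hPeval (η * σ''), harg1, harg2, hzpB, ← hevalA (η * σ''),
        Finset.prod_div_distrib]
      set d2 := ∏ σ''' ∈ B.erase σ'', (σ'' - σ''') with hd2
      set n2 := ∏ σ''' ∈ B.erase σ'', (η⁻¹ * σ'' - η * σ''') with hn2
      set x1 := (Q (j - 1)).eval (η * σ'') with hx1def
      set x2 := (Q (j - 1)).eval (η⁻¹ * σ'') with hx2def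
      set y1 := (Q j).eval ((η ^ 2)⁻¹ * σ'') with hy1def
      set y2 := (Q j).eval (η ^ 2 * σ'') with hy2def
      set z1 := (Q (j + 1)).eval (η * σ'') with hz1def
      set z2 := (Q (j + 1)).eval (η⁻¹ * σ'') with hz2def
      have hx1 : x1 ≠ 0 := hpv.1
      have hx2 : x2 ≠ 0 := hpv.2
      have hd2ne : d2 ≠ 0 :=
        Finset.prod_ne_zero_iff.mpr fun σ''' h' =>
          sub_ne_zero.mpr (fun he => (Finset.mem_erase.mp h').1 he.symm)
      have hbN : τ' (j - 1) * x1 * ((η⁻¹ - η) * σ'' * n2) * z1 +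
          τ' j * x2 * y2 * z2 * η ^ j = 0 := by
        linear_combination η ^ j * hb + τ' (j - 1) * x1 * z1 * hN''
      have hz1 : z1 ≠ 0 := hvEA
      have hpow : η ^ j = η ^ (j - 1) * η := by
        rw [← pow_succ]
        congr 1
        omega
      rw [hpow] at hbN ⊢
      exact scalar_claimB η σ'' x1 x2 y2 z1 z2 n2 d2 (τ' (j - 1)) (τ' j) (j - 1)
        hη hσ0 hx2 hd2ne hz1 hbN
    rw [claim0, Finset.sum_congr rfl claimA, Finset.sum_congr rfl claimB, ← Finset.mul_sum,
      ← Finset.mul_sum, IHj] at hres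
    have hκ : (η⁻¹ - η) * (η ^ j)⁻¹ ≠ 0 := mul_ne_zero hη1 (inv_ne_zero (pow_ne_zero _ hη))
    have hid : ((η⁻¹ - η) * (η ^ j)⁻¹) * τ' j =
        τ' j * η * (((η ^ 2)⁻¹) ^ (j + 1) * η ^ j) - τ' j * (η * (η ^ j)⁻¹) := by
      rw [inv_pow]
      field_simp
      ring
    rw [Finset.sum_range_succ]
    refine mul_left_cancel₀ hκ ?_
    linear_combination hres - hid

/-- **Magnetic-frame r = 1 trigonometric Ruijsenaars–Schneider relation for
`T[U(N)]`**: if the polynomials `Q₀ = 1, Q₁, …, Q_N` (with `Q_j` monic of degree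
`j`, with simple nonzero roots, and `μ₁,…,μ_N` the roots of `Q_N`) satisfy the
Bethe equations at every root of every intermediate `Q_j`, then
`Σ_α (∏_{β≠α} (η⁻¹μ_α − ημ_β)/(μ_α − μ_β)) · τ_N η^{1−N} Q_{N-1}(ημ_α)/Q_{N-1}(η⁻¹μ_α)
 = τ₁ + ⋯ + τ_N`. -/
theorem tun_magnetic_frame_first_hamiltonian (N : ℕ) (hN : 1 ≤ N) (η : ℂ)
    (hη : η ≠ 0) (hηroot : ∀ n : ℕ, 1 ≤ n → η ^ n ≠ 1)
    (Q : ℕ → Polynomial ℂ) (hQ0 : Q 0 = 1)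
    (hmonic : ∀ j : ℕ, 1 ≤ j → j ≤ N → (Q j).Monic)
    (hdeg : ∀ j : ℕ, 1 ≤ j → j ≤ N → (Q j).natDegree = j)
    (hsimple : ∀ j : ℕ, 1 ≤ j → j ≤ N → (Q j).roots.Nodup)
    (hnonzeroroot : ∀ j : ℕ, 1 ≤ j → j ≤ N → (Q j).eval 0 ≠ 0)
    (μ : Fin N → ℂ)
    (hroots : Q N = ∏ α : Fin N, (Polynomial.X - Polynomial.C (μ α)))
    (hgen : ∀ j : ℕ, 1 ≤ j → j ≤ N → ∀ x y : ℂ,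
      (Q j).eval x = 0 → (Q (j - 1)).eval y = 0 → x ≠ η * y ∧ x ≠ η⁻¹ * y)
    (τ : Fin N → ℂ)
    (hbethe : ∀ j : ℕ, ∀ hj1 : 1 ≤ j, ∀ hjN : j + 1 ≤ N, ∀ x : ℂ, (Q j).eval x = 0 →
      τ ⟨j - 1, by omega⟩ * (Q (j - 1)).eval (η * x) * (Q j).eval ((η ^ 2)⁻¹ * x) *
          (Q (j + 1)).eval (η * x) +
        τ ⟨j, by omega⟩ * (Q (j - 1)).eval (η⁻¹ * x) * (Q j).eval (η ^ 2 * x) *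
          (Q (j + 1)).eval (η⁻¹ * x) = 0) :
    ∑ α : Fin N,
      (∏ β ∈ Finset.univ.erase α, (η⁻¹ * μ α - η * μ β) / (μ α - μ β)) *
        (τ ⟨N - 1, by omega⟩ * η ^ ((1 : ℤ) - (N : ℤ)) *
          ((Q (N - 1)).eval (η * μ α) / (Q (N - 1)).eval (η⁻¹ * μ α))) =
      ∑ i : Fin N, τ i := by
  have hη2 : η ^ 2 ≠ 1 := hηroot 2 (by norm_num)
  set τ' : ℕ → ℂ := fun i => if h : i < N then τ ⟨i, h⟩ else 0 with hτ'def
  have hτ' : ∀ i (h : i < N), τ' i = τ ⟨i, h⟩ := fun i h => dif_pos h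
  have hbethe' : ∀ j : ℕ, 1 ≤ j → j + 1 ≤ N → ∀ x : ℂ, (Q j).eval x = 0 →
      τ' (j - 1) * (Q (j - 1)).eval (η * x) * (Q j).eval ((η ^ 2)⁻¹ * x) *
          (Q (j + 1)).eval (η * x) +
        τ' j * (Q (j - 1)).eval (η⁻¹ * x) * (Q j).eval (η ^ 2 * x) *
          (Q (j + 1)).eval (η⁻¹ * x) = 0 := by
    intro j h1 h2 x hx
    rw [hτ' (j - 1) (by omega), hτ' j (by omega)]
    exact hbethe j h1 h2 x hx
  have hfin := aux_S N η hη hη2 Q hQ0 hmonic hdeg hsimple hnonzeroroot hgen τ' hbethe'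
    N hN le_rfl
  have hrootsQN : (Q N).roots = Multiset.map μ Finset.univ.val := by
    rw [hroots, Finset.prod_eq_multiset_prod,
      show Multiset.map (fun α => X - C (μ α)) Finset.univ.val =
        Multiset.map (fun a => X - C a) (Multiset.map μ Finset.univ.val) from by
          rw [Multiset.map_map]; rfl,
      Polynomial.roots_multiset_prod_X_sub_C]
  have hnd : (Multiset.map μ Finset.univ.val).Nodup := hrootsQN ▸ hsimple N hN le_rfl
  have hμinj : Function.Injective μ := fun a b h =>
    Multiset.inj_on_of_nodup_map hnd a (Finset.mem_val.mpr (Finset.mem_univ a))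
      b (Finset.mem_val.mpr (Finset.mem_univ b)) h
  have htoF : (Q N).roots.toFinset = Finset.univ.image μ := by
    rw [hrootsQN]
    ext x
    simp [List.mem_ofFn]
  rw [htoF, Finset.sum_image (fun a _ b _ h => hμinj h)] at hfin
  have hinner : ∀ α : Fin N,
      (∏ σ' ∈ (Finset.univ.image μ).erase (μ α), (η⁻¹ * μ α - η * σ') / (μ α - σ')) =
      ∏ β ∈ Finset.univ.erase α, (η⁻¹ * μ α - η * μ β) / (μ α - μ β) := by
    intro α
    rw [← Finset.image_erase hμinj, Finset.prod_image (fun a _ b _ h => hμinj h)]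
  simp only [hinner] at hfin
  rw [hτ' (N - 1) (by omega)] at hfin
  have hsum : ∑ i ∈ Finset.range N, τ' i = ∑ i : Fin N, τ i := by
    rw [← Fin.sum_univ_eq_sum_range]
    exact Finset.sum_congr rfl fun i _ => by rw [hτ' i.1 i.2]
  rw [hsum] at hfin
  exact hfin
end

section
/- Let q, μ₁, μ₂ ∈ ℂ∖{0} with q^n ≠ 1 and μ₁ ≠ q^n μ₂ for all integers n ≥ 1. Define the formal power series F(z) = Σ_{n≥0} q^{n(n+1)/2}·z^n / ∏_{j=1}^{n} [ (1 − q^j)(μ₁ − q^j μ₂) ]. Then, as an identity of formal power series in z: μ₁·F(z/q) + μ₂·F(qz) − z·F(z) = (μ₁ + μ₂)·F(z). -/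
/-- The vortex partition function of the surface defect of 5d pure `U(2)` SYM
in the decoupling limit (the equivariant K-theoretic J-function of `ℙ¹`):
`F(z) = Σ_n q^{n(n+1)/2} zⁿ / ∏_{j=1}^{n} (1 − qʲ)(μ₁ − qʲμ₂)`. -/
noncomputable def todaVortex (q μ₁ μ₂ : ℂ) : PowerSeries ℂ :=
  PowerSeries.mk fun n =>
    q ^ (n * (n + 1) / 2) /
      ∏ j ∈ Finset.range n, ((1 - q ^ (j + 1)) * (μ₁ - q ^ (j + 1) * μ₂))

/-- The `ℙ¹` vortex series satisfies the two-body open relativistic (q-)Toda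
difference equation `μ₁ F(z/q) + μ₂ F(qz) − z F(z) = (μ₁ + μ₂) F(z)`
as an identity of formal power series in `z`. -/
theorem toda_vortex_difference_equation (q μ₁ μ₂ : ℂ) (hq0 : q ≠ 0)
    (hμ₁ : μ₁ ≠ 0) (hμ₂ : μ₂ ≠ 0)
    (hq1 : ∀ n : ℕ, 1 ≤ n → q ^ n ≠ 1)
    (hμ : ∀ n : ℕ, 1 ≤ n → μ₁ ≠ q ^ n * μ₂) :
    PowerSeries.C μ₁ * PowerSeries.rescale q⁻¹ (todaVortex q μ₁ μ₂) +
        PowerSeries.C μ₂ * PowerSeries.rescale q (todaVortex q μ₁ μ₂) -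
        PowerSeries.X * todaVortex q μ₁ μ₂ =
      PowerSeries.C (μ₁ + μ₂) * todaVortex q μ₁ μ₂ := by
  have hP : ∀ n : ℕ,
      (∏ j ∈ Finset.range n, ((1 - q ^ (j + 1)) * (μ₁ - q ^ (j + 1) * μ₂))) ≠ 0 := by
    intro n
    apply Finset.prod_ne_zero_iff.2
    intro j _
    apply mul_ne_zero
    · exact sub_ne_zero.2 fun h => hq1 (j + 1) (by omega) h.symm
    · exact sub_ne_zero.2 (hμ (j + 1) (by omega))
  ext n
  cases n with
  | zero =>
    simp only [map_sub, map_add, add_mul, PowerSeries.coeff_C_mul,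
      PowerSeries.coeff_rescale, todaVortex, PowerSeries.coeff_mk]
    simp
  | succ m =>
    simp only [map_sub, map_add, add_mul, PowerSeries.coeff_C_mul,
      PowerSeries.coeff_rescale, PowerSeries.coeff_succ_X_mul, todaVortex,
      PowerSeries.coeff_mk]
    have hprod : (∏ j ∈ Finset.range (m + 1),
        ((1 - q ^ (j + 1)) * (μ₁ - q ^ (j + 1) * μ₂))) =
        (∏ j ∈ Finset.range m, ((1 - q ^ (j + 1)) * (μ₁ - q ^ (j + 1) * μ₂))) *
          ((1 - q ^ (m + 1)) * (μ₁ - q ^ (m + 1) * μ₂)) := Finset.prod_range_succ _ _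
    have htri : (m * (m + 1 + 1) + 1 * (m + 1 + 1)) / 2 = m * (m + 1) / 2 + (m + 1) := by
      have h2 : 2 ∣ m * (m + 1) := (Nat.even_mul_succ_self m).two_dvd
      have h : m * (m + 1 + 1) + 1 * (m + 1 + 1) = m * (m + 1) + 2 * (m + 1) := by ring
      omega
    rw [hprod, htri, pow_add q (m * (m + 1) / 2) (m + 1), inv_pow q (m + 1)]
    have hPm := hP m
    have h1 : (1 : ℂ) - q ^ (m + 1) ≠ 0 := sub_ne_zero.2 fun h => hq1 (m + 1) (by omega) h.symm
    have h2 : μ₁ - q ^ (m + 1) * μ₂ ≠ 0 := sub_ne_zero.2 (hμ (m + 1) (by omega))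
    have hqm : q ^ (m + 1) ≠ 0 := pow_ne_zero _ hq0
    have key : ∀ P A B : ℂ, P ≠ 0 → B ≠ 0 → (1 - B) ≠ 0 → (μ₁ - B * μ₂) ≠ 0 →
        μ₁ * ((B)⁻¹ * (A * B / (P * ((1 - B) * (μ₁ - B * μ₂))))) +
          μ₂ * (B * (A * B / (P * ((1 - B) * (μ₁ - B * μ₂))))) - A / P =
        μ₁ * (A * B / (P * ((1 - B) * (μ₁ - B * μ₂)))) +
          μ₂ * (A * B / (P * ((1 - B) * (μ₁ - B * μ₂)))) := by
      intro P A B hP0 hB hD1 hD2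
      field_simp
      ring
    exact key (∏ j ∈ Finset.range m, ((1 - q ^ (j + 1)) * (μ₁ - q ^ (j + 1) * μ₂)))
      (q ^ (m * (m + 1) / 2)) (q ^ (m + 1)) hPm hqm h1 h2
end

section
/- Let q, μ₁, μ₂, τ₁, τ₂ ∈ ℂ∖{0} with |q| < 1 and μ₁ ≠ q^n μ₂ for all integers n ≥ 1. Let θ(a,q) := ∏_{m=0}^∞ (1 − a q^m)(1 − q^{m+1} a⁻¹), which converges for |q| < 1 and a ≠ 0, and assume θ(μ₁τ₁,q) ≠ 0 and θ(μ₂τ₂,q) ≠ 0. Let F(z) = Σ_{n≥0} q^{n(n+1)/2}·z^n / ∏_{j=1}^{n} [ (1 − q^j)(μ₁ − q^j μ₂) ] (an entire function of z since |q| < 1), and define G(τ₁, τ₂) := [ θ(τ₁,q)·θ(μ₁,q)·θ(τ₂,q)·θ(μ₂,q) / ( θ(μ₁τ₁,q)·θ(μ₂τ₂,q) ) ] · F(τ₂/τ₁). Then G(qτ₁, τ₂) + G(τ₁, qτ₂) − (τ₂/τ₁)·G(τ₁, τ₂) = (μ₁ + μ₂)·G(τ₁, τ₂), and G(qτ₁,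 qτ₂) = μ₁μ₂·G(τ₁, τ₂). -/
/-- The theta function `θ(a,q) = ∏_{m≥0} (1 − a qᵐ)(1 − q^{m+1} a⁻¹)`. -/
noncomputable def thetaFn (a q : ℂ) : ℂ :=
  ∏' m : ℕ, ((1 - a * q ^ m) * (1 - q ^ (m + 1) * a⁻¹))

/-- The `ℙ¹` vortex sum
`F(z) = Σ_n q^{n(n+1)/2} zⁿ / ∏_{j=1}^{n} (1 − qʲ)(μ₁ − qʲμ₂)`. -/
noncomputable def todaVortexSum (q μ₁ μ₂ z : ℂ) : ℂ :=
  ∑' n : ℕ, q ^ (n * (n + 1) / 2) * z ^ n /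
    ∏ j ∈ Finset.range n, ((1 - q ^ (j + 1)) * (μ₁ - q ^ (j + 1) * μ₂))

/-- The theta-dressed holomorphic block of the 5d pure `U(2)` SYM surface defect
in the decoupling limit:
`G(τ₁,τ₂) = θ(τ₁,q)θ(μ₁,q)θ(τ₂,q)θ(μ₂,q)/(θ(μ₁τ₁,q)θ(μ₂τ₂,q)) · F(τ₂/τ₁)`. -/
noncomputable def todaBlock (q μ₁ μ₂ τ₁ τ₂ : ℂ) : ℂ :=
  thetaFn τ₁ q * thetaFn μ₁ q * thetaFn τ₂ q * thetaFn μ₂ q /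
      (thetaFn (μ₁ * τ₁) q * thetaFn (μ₂ * τ₂) q) *
    todaVortexSum q μ₁ μ₂ (τ₂ / τ₁)

open Filter Complex Topology

section ThetaAux

lemma hasProd_zero_of_eq_zero {f : ℕ → ℂ} {m0 : ℕ} (h : f m0 = 0) : HasProd f 0 := by
  have hev : ∀ᶠ s : Finset ℕ in atTop, ∏ i ∈ s, f i = 0 := by
    filter_upwards [Filter.eventually_ge_atTop ({m0} : Finset ℕ)] with s hs
    exact Finset.prod_eq_zero (hs (Finset.mem_singleton_self m0)) h
  exact Filter.Tendsto.congr' (hev.mono fun _ h => h.symm) tendsto_const_nhds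

lemma multipliable_one_sub_mul_pow {q : ℂ} (hq : ‖q‖ < 1) (a : ℂ) :
    Multipliable (fun m : ℕ => 1 - a * q ^ m) := by
  by_cases hz : ∃ m, 1 - a * q ^ m = 0
  · obtain ⟨m0, hm0⟩ := hz
    exact ⟨0, hasProd_zero_of_eq_zero hm0⟩
  · push_neg at hz
    have htend : Tendsto (fun m : ℕ => ‖a * q ^ m‖) atTop (𝓝 0) := by
      have := (tendsto_pow_atTop_nhds_zero_of_norm_lt_one (x := q) (by simpa using hq)).const_mul a
      simpa using this.norm
    have hsum : Summable fun m : ℕ => Complex.log (1 - a * q ^ m) := by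
      apply Summable.of_norm_bounded_eventually_nat (g := fun m => 3/2 * (‖a‖ * ‖q‖ ^ m))
      · exact ((summable_geometric_of_lt_one (norm_nonneg q)
          (by simpa using hq)).mul_left ‖a‖).mul_left (3/2)
      · filter_upwards [htend.eventually_le_const (by norm_num : (0:ℝ) < 1/2)] with m hm
        have : ‖Complex.log (1 + -(a * q ^ m))‖ ≤ 3/2 * ‖-(a * q ^ m)‖ :=
          Complex.norm_log_one_add_half_le_self (by simpa using hm)
        simpa [sub_eq_add_neg, norm_mul, norm_pow] using this
    exact Complex.multipliable_of_summable_log hsum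

lemma thetaFn_q_mul {q : ℂ} (hq0 : q ≠ 0) (hq : ‖q‖ < 1) {a : ℂ} (ha : a ≠ 0) :
    thetaFn (q * a) q = -a⁻¹ * thetaFn a q := by
  have mu : ∀ b : ℂ, Multipliable fun m : ℕ => 1 - b * q ^ m := multipliable_one_sub_mul_pow hq
  set A : ℂ := ∏' m : ℕ, (1 - a * q * q ^ m) with hA
  set B : ℂ := ∏' m : ℕ, (1 - a⁻¹ * q * q ^ m) with hB
  have h1 : thetaFn a q = (1 - a) * A * B := by
    rw [thetaFn, Multipliable.tprod_mul (mu a) (((mu (a⁻¹*q)).congr (fun m => by ring)))]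
    have hsh : (∏' m : ℕ, (1 - a * q ^ m)) = (1 - a) * A := by
      rw [tprod_eq_zero_mul' ((mu (a*q)).congr (fun m => by rw [pow_succ]; ring))]
      simp only [pow_zero, mul_one, hA]
      congr 1
      exact tprod_congr fun m => by rw [pow_succ]; ring
    rw [hsh]
    have : (∏' m : ℕ, (1 - q ^ (m+1) * a⁻¹)) = B :=
      tprod_congr fun m => by rw [pow_succ]; ring
    rw [this]
  have h2 : thetaFn (q * a) q = A * ((1 - a⁻¹) * B) := by
    rw [thetaFn]
    have hcongr : ∀ m : ℕ, (1 - q * a * q ^ m) * (1 - q ^ (m+1) * (q*a)⁻¹)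
        = (1 - a * q * q ^ m) * (1 - a⁻¹ * q ^ m) := by
      intro m
      rw [mul_inv, pow_succ]
      field_simp
    rw [tprod_congr hcongr, Multipliable.tprod_mul ((mu (a*q)).congr (fun m => by ring))
      ((mu a⁻¹).congr (fun m => rfl))]
    congr 1
    rw [tprod_eq_zero_mul' ((mu (a⁻¹*q)).congr (fun m => by rw [pow_succ]; ring))]
    simp only [pow_zero, mul_one, hB]
    congr 1
    exact tprod_congr fun m => by rw [pow_succ]; ring
  rw [h1, h2]
  field_simp
  ring

end ThetaAux

section Vortex

variable {q μ₁ μ₂ : ℂ} (hq0 : q ≠ 0) (hq : ‖q‖ < 1) (hμ₁ : μ₁ ≠ 0)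
  (hμ : ∀ n : ℕ, 1 ≤ n → μ₁ ≠ q ^ n * μ₂)

/-- abbreviation for the term of the vortex sum -/
noncomputable def vTerm (q μ₁ μ₂ z : ℂ) (n : ℕ) : ℂ :=
  q ^ (n * (n + 1) / 2) * z ^ n /
    ∏ j ∈ Finset.range n, ((1 - q ^ (j + 1)) * (μ₁ - q ^ (j + 1) * μ₂))

include hq in
lemma hq1 : ∀ j : ℕ, (1 : ℂ) - q ^ (j + 1) ≠ 0 := by
  intro j
  rw [sub_ne_zero]
  intro h
  have : ‖q ^ (j+1)‖ < 1 :=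
    (by rw [norm_pow]; exact pow_lt_one₀ (norm_nonneg q) hq (Nat.succ_ne_zero j))
  rw [← h] at this; simp at this

include hμ in
lemma hμj : ∀ j : ℕ, μ₁ - q ^ (j + 1) * μ₂ ≠ 0 := fun j =>
  sub_ne_zero.2 (hμ (j + 1) (by omega))

include hq hμ in
lemma hD : ∀ n : ℕ, (∏ j ∈ Finset.range n, ((1 - q ^ (j + 1)) * (μ₁ - q ^ (j + 1) * μ₂))) ≠ 0 :=
  fun n => Finset.prod_ne_zero_iff.2 fun j _ => mul_ne_zero (hq1 hq j) (hμj hμ j)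

lemma tri_succ (n : ℕ) : (n + 1) * (n + 1 + 1) / 2 = n * (n + 1) / 2 + (n + 1) := by
  have h : (n + 1) * (n + 1 + 1) = n * (n + 1) + (n + 1) * 2 := by ring
  rw [h, Nat.add_mul_div_right _ _ (by norm_num)]

include hq0 hq hμ in
lemma vTerm_succ (z : ℂ) (n : ℕ) :
    vTerm q μ₁ μ₂ z (n + 1) =
      vTerm q μ₁ μ₂ z n *
        (q ^ (n + 1) * z / ((1 - q ^ (n + 1)) * (μ₁ - q ^ (n + 1) * μ₂))) := by
  unfold vTerm
  rw [tri_succ, pow_add, Finset.prod_range_succ, pow_succ, div_mul_div_comm]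
  congr 1
  ring

include hq0 hq hμ in
lemma vTerm_ne_zero {z : ℂ} (hz : z ≠ 0) (n : ℕ) : vTerm q μ₁ μ₂ z n ≠ 0 :=
  div_ne_zero (mul_ne_zero (pow_ne_zero _ hq0) (pow_ne_zero _ hz)) (hD hq hμ n)

include hq0 hq hμ₁ hμ in
lemma vTerm_summable {z : ℂ} (hz : z ≠ 0) : Summable (vTerm q μ₁ μ₂ z) := by
  apply summable_of_ratio_test_tendsto_lt_one (l := 0) one_pos
    (Eventually.of_forall (vTerm_ne_zero hq0 hq hμ hz))
  have h1 : Tendsto (fun n : ℕ => q ^ (n + 1)) atTop (𝓝 0) := by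
    have := tendsto_pow_atTop_nhds_zero_of_norm_lt_one (x := q) (by simpa using hq)
    exact this.comp (tendsto_add_atTop_nat 1)
  have hg : ContinuousAt (fun w : ℂ => ‖w * z / ((1 - w) * (μ₁ - w * μ₂))‖) 0 := by
    apply ContinuousAt.norm
    apply ContinuousAt.div (by fun_prop) (by fun_prop)
    simpa using hμ₁
  have h2 : Tendsto (fun n : ℕ =>
      ‖q ^ (n + 1) * z / ((1 - q ^ (n + 1)) * (μ₁ - q ^ (n + 1) * μ₂))‖) atTop (𝓝 0) := by
    simpa [Function.comp_def] using hg.tendsto.comp h1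
  apply h2.congr
  intro n
  have hne : ‖vTerm q μ₁ μ₂ z n‖ ≠ 0 := norm_ne_zero_iff.2 (vTerm_ne_zero hq0 hq hμ hz n)
  rw [vTerm_succ hq0 hq hμ z n, norm_mul, mul_comm ‖vTerm q μ₁ μ₂ z n‖]
  exact (mul_div_cancel_right₀ _ hne).symm

include hq0 hq hμ₁ hμ in
lemma vortex_funceq {z : ℂ} (hz : z ≠ 0) :
    μ₁ * todaVortexSum q μ₁ μ₂ (z / q) + μ₂ * todaVortexSum q μ₁ μ₂ (q * z) -
      z * todaVortexSum q μ₁ μ₂ z = (μ₁ + μ₂) * todaVortexSum q μ₁ μ₂ z := by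
  have S₁ := vTerm_summable hq0 hq hμ₁ hμ (div_ne_zero hz hq0)
  have S₂ := vTerm_summable hq0 hq hμ₁ hμ (mul_ne_zero hq0 hz)
  have S₃ := vTerm_summable hq0 hq hμ₁ hμ hz
  set g : ℕ → ℂ := fun n =>
    μ₁ * vTerm q μ₁ μ₂ (z / q) n + μ₂ * vTerm q μ₁ μ₂ (q * z) n -
      (μ₁ + μ₂) * vTerm q μ₁ μ₂ z n with hg
  have hgsum : Summable g := ((S₁.mul_left μ₁).add (S₂.mul_left μ₂)).sub (S₃.mul_left (μ₁ + μ₂))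
  have hFdef : ∀ w : ℂ, todaVortexSum q μ₁ μ₂ w = ∑' n, vTerm q μ₁ μ₂ w n := fun w => rfl
  have htsum : ∑' n, g n =
      μ₁ * todaVortexSum q μ₁ μ₂ (z / q) + μ₂ * todaVortexSum q μ₁ μ₂ (q * z) -
        (μ₁ + μ₂) * todaVortexSum q μ₁ μ₂ z := by
    rw [hFdef, hFdef, hFdef, ← tsum_mul_left, ← tsum_mul_left, ← tsum_mul_left,
      ← Summable.tsum_add (S₁.mul_left μ₁) (S₂.mul_left μ₂),
      ← Summable.tsum_sub ((S₁.mul_left μ₁).add (S₂.mul_left μ₂)) (S₃.mul_left (μ₁ + μ₂))]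
  have hkey : ∀ n, g (n + 1) = z * vTerm q μ₁ μ₂ z n := by
    intro n
    have hQ := pow_ne_zero (n + 1) hq0
    have hD' := hD hq hμ n
    have h1 := hq1 hq n
    have h2 := hμj hμ n
    have hE : (1 - q ^ (n + 1)) * (μ₁ - q ^ (n + 1) * μ₂) ≠ 0 := mul_ne_zero h1 h2
    show μ₁ * vTerm q μ₁ μ₂ (z / q) (n + 1) + μ₂ * vTerm q μ₁ μ₂ (q * z) (n + 1) -
        (μ₁ + μ₂) * vTerm q μ₁ μ₂ z (n + 1) = z * vTerm q μ₁ μ₂ z n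
    unfold vTerm
    rw [tri_succ, pow_add q (n * (n + 1) / 2) (n + 1), Finset.prod_range_succ,
      div_pow z q (n + 1), mul_pow q z (n + 1)]
    have e1 : q ^ (n * (n + 1) / 2) * q ^ (n + 1) * (z ^ (n + 1) / q ^ (n + 1))
        = q ^ (n * (n + 1) / 2) * z ^ (n + 1) := by
      field_simp
    rw [e1, ← mul_div_assoc, ← mul_div_assoc, ← mul_div_assoc, ← mul_div_assoc,
      ← add_div, ← sub_div,
      div_eq_div_iff (mul_ne_zero hD' hE) hD']
    ring
  have hg0 : g 0 = 0 := by
    simp [hg, vTerm]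
  have hshift : ∑' n, g n = z * todaVortexSum q μ₁ μ₂ z := by
    rw [Summable.tsum_eq_zero_add hgsum, hg0, zero_add, hFdef, ← tsum_mul_left]
    exact tsum_congr hkey
  linear_combination hshift - htsum

end Vortex

/-- The theta-dressed block is an eigenfunction of the two-body open relativistic
(q-)Toda Hamiltonians `p₁ + p₂ − τ₂/τ₁` and `p₁p₂`, with eigenvalues `μ₁ + μ₂`
and `μ₁μ₂`. -/
theorem toda_block_eigenfunction (q μ₁ μ₂ τ₁ τ₂ : ℂ)
    (hq0 : q ≠ 0) (hq : ‖q‖ < 1)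
    (hμ₁ : μ₁ ≠ 0) (hμ₂ : μ₂ ≠ 0) (hτ₁ : τ₁ ≠ 0) (hτ₂ : τ₂ ≠ 0)
    (hμ : ∀ n : ℕ, 1 ≤ n → μ₁ ≠ q ^ n * μ₂)
    (hθ1 : thetaFn (μ₁ * τ₁) q ≠ 0) (hθ2 : thetaFn (μ₂ * τ₂) q ≠ 0) :
    todaBlock q μ₁ μ₂ (q * τ₁) τ₂ + todaBlock q μ₁ μ₂ τ₁ (q * τ₂) -
        τ₂ / τ₁ * todaBlock q μ₁ μ₂ τ₁ τ₂ =
      (μ₁ + μ₂) * todaBlock q μ₁ μ₂ τ₁ τ₂ ∧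
    todaBlock q μ₁ μ₂ (q * τ₁) (q * τ₂) = μ₁ * μ₂ * todaBlock q μ₁ μ₂ τ₁ τ₂ := by
  have e1 : todaBlock q μ₁ μ₂ (q * τ₁) τ₂ =
      μ₁ * (thetaFn τ₁ q * thetaFn μ₁ q * thetaFn τ₂ q * thetaFn μ₂ q /
        (thetaFn (μ₁ * τ₁) q * thetaFn (μ₂ * τ₂) q)) *
        todaVortexSum q μ₁ μ₂ (τ₂ / τ₁ / q) := by
    rw [todaBlock, show μ₁ * (q * τ₁) = q * (μ₁ * τ₁) by ring,
      thetaFn_q_mul hq0 hq hτ₁, thetaFn_q_mul hq0 hq (mul_ne_zero hμ₁ hτ₁),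
      show τ₂ / (q * τ₁) = τ₂ / τ₁ / q by rw [div_div, mul_comm]]
    field_simp
  have e2 : todaBlock q μ₁ μ₂ τ₁ (q * τ₂) =
      μ₂ * (thetaFn τ₁ q * thetaFn μ₁ q * thetaFn τ₂ q * thetaFn μ₂ q /
        (thetaFn (μ₁ * τ₁) q * thetaFn (μ₂ * τ₂) q)) *
        todaVortexSum q μ₁ μ₂ (q * (τ₂ / τ₁)) := by
    rw [todaBlock, show μ₂ * (q * τ₂) = q * (μ₂ * τ₂) by ring,
      thetaFn_q_mul hq0 hq hτ₂, thetaFn_q_mul hq0 hq (mul_ne_zero hμ₂ hτ₂),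
      show q * τ₂ / τ₁ = q * (τ₂ / τ₁) by rw [mul_div_assoc]]
    field_simp
  constructor
  · have hfe := vortex_funceq hq0 hq hμ₁ hμ (div_ne_zero hτ₂ hτ₁)
    rw [e1, e2, todaBlock]
    linear_combination (thetaFn τ₁ q * thetaFn μ₁ q * thetaFn τ₂ q * thetaFn μ₂ q /
      (thetaFn (μ₁ * τ₁) q * thetaFn (μ₂ * τ₂) q)) * hfe
  · rw [todaBlock, todaBlock, show μ₁ * (q * τ₁) = q * (μ₁ * τ₁) by ring,
      show μ₂ * (q * τ₂) = q * (μ₂ * τ₂) by ring,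
      thetaFn_q_mul hq0 hq hτ₁, thetaFn_q_mul hq0 hq hτ₂,
      thetaFn_q_mul hq0 hq (mul_ne_zero hμ₁ hτ₁), thetaFn_q_mul hq0 hq (mul_ne_zero hμ₂ hτ₂),
      show q * τ₂ / (q * τ₁) = τ₂ / τ₁ by rw [mul_div_mul_left _ _ hq0]]
    field_simp
end
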